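/- arXiv:2306.01963 — 2 statements merged into one kernel-verified Lean document; each statement's English description precedes it below -/
import Mathlib

section
/- Let (θ₁, φ₁), (θ₂, φ₂), (θ₃, φ₃) be independent, each uniformly distributed on [0,2π]², and set hᵢ := sin θᵢ·sin φᵢ. Fix a real number a and a natural number n_R ≥ 1, and define G₁ := Σ_{s=1}^{n_R−1} (n_R − s)·cos(s·a·(h₁ − h₃)) and G₂ := Σ_{s=1}^{n_R−1} (n_R − s)·cos(s·a·(h₂ − h₃)). Then the covariance E[G₁·G₂] − E[G₁]·E[G₂] equals Σ_{s₂=1}^{n_R−1} Σ_{s₁=1}^{n_R−1} (n_R − s₁)(n_R − s₂)·(J₀(s₁·a/2)²·J₀(s₂·a/2)²/2)·(J₀((s₁ + s₂)·a/2)² + J₀(|s₁ − s₂|·a/2)²) − (Σ_{s=1}^{n_R−1} (n_R − s)·J₀(s·a/2)⁴)². -/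
open Real MeasureTheory Finset
open intervalIntegral

/-- Bessel function of the first kind of order zero (integral representation). -/
noncomputable def J₀ (x : ℝ) : ℝ :=
  (1 / (2 * π)) * ∫ t in (0:ℝ)..(2 * π), Real.cos (x * Real.sin t)

/-- Expectation over three independent pairs of angles, each uniform on `[0, 2π]²`. -/
noncomputable def E6 (f : ℝ → ℝ → ℝ → ℝ → ℝ → ℝ → ℝ) : ℝ :=
  (1 / (2 * π) ^ 6) *
    ∫ θ₁ in (0:ℝ)..(2 * π), ∫ φ₁ in (0:ℝ)..(2 * π),
      ∫ θ₂ in (0:ℝ)..(2 * π), ∫ φ₂ in (0:ℝ)..(2 * π),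
        ∫ θ₃ in (0:ℝ)..(2 * π), ∫ φ₃ in (0:ℝ)..(2 * π), f θ₁ φ₁ θ₂ φ₂ θ₃ φ₃

noncomputable def S (c : ℝ) : ℝ := ∫ t in (0:ℝ)..(2*π), Real.cos (c * Real.sin t)

lemma sin_int (c : ℝ) : ∫ t in (0:ℝ)..(2*π), Real.sin (c * Real.sin t) = 0 := by
  have h := intervalIntegral.integral_comp_sub_left (a := (0:ℝ)) (b := 2*π)
    (fun t => Real.sin (c * Real.sin t)) (2*π)
  simp only [Real.sin_sub, Real.sin_two_pi, Real.cos_two_pi, zero_mul, one_mul, zero_sub,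
    mul_neg, Real.sin_neg, sub_self, sub_zero] at h
  rw [intervalIntegral.integral_neg] at h
  linarith [h]

lemma S_cont : Continuous S := by
  apply intervalIntegral.continuous_parametric_intervalIntegral_of_continuous'
    (f := fun c t => Real.cos (c * Real.sin t))
  fun_prop

lemma S_neg (c : ℝ) : S (-c) = S c := by
  unfold S; refine intervalIntegral.integral_congr fun t _ => ?_
  simp

lemma S_eq (c : ℝ) : S c = 2 * π * J₀ c := by
  unfold S J₀
  field_simp

lemma shift_int (f : ℝ → ℝ) (hf : Function.Periodic f (2*π)) (c : ℝ) :
    ∫ t in (0:ℝ)..(2*π), f (t + c) = ∫ t in (0:ℝ)..(2*π), f t := by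
  rw [intervalIntegral.integral_comp_add_right]
  have := hf.intervalIntegral_add_eq c 0
  simpa [add_comm] using this

-- ∫ cos (C cos(u - d)) du = S C
lemma cos_cos_int (C d : ℝ) :
    ∫ u in (0:ℝ)..(2*π), Real.cos (C * Real.cos (u - d)) = S C := by
  have p1 : Function.Periodic (fun u => Real.cos (C * Real.cos u)) (2*π) := by
    intro x; simp [Real.cos_add_two_pi]
  have h1 : ∫ u in (0:ℝ)..(2*π), Real.cos (C * Real.cos (u - d))
      = ∫ u in (0:ℝ)..(2*π), Real.cos (C * Real.cos u) := by
    have := shift_int (fun u => Real.cos (C * Real.cos u)) p1 (-d)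
    simpa [sub_eq_add_neg] using this
  have p2 : Function.Periodic (fun t => Real.cos (C * Real.sin t)) (2*π) := by
    intro x; simp [Real.sin_add_two_pi]
  have h2 : ∫ u in (0:ℝ)..(2*π), Real.cos (C * Real.cos u)
      = ∫ t in (0:ℝ)..(2*π), Real.cos (C * Real.sin t) := by
    rw [← shift_int (fun t => Real.cos (C * Real.sin t)) p2 (π/2)]
    refine intervalIntegral.integral_congr fun u _ => ?_
    simp [Real.sin_add_pi_div_two]
  rw [h1, h2]; rfl

lemma swap_int (F : ℝ → ℝ → ℝ) (hF : Continuous fun p : ℝ × ℝ => F p.1 p.2) :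
    ∫ u in (0:ℝ)..(2*π), ∫ w in (0:ℝ)..(2*π), F u w
      = ∫ w in (0:ℝ)..(2*π), ∫ u in (0:ℝ)..(2*π), F u w := by
  have h2π : (0:ℝ) ≤ 2*π := by positivity
  rw [intervalIntegral.integral_of_le h2π, intervalIntegral.integral_of_le h2π]
  simp_rw [intervalIntegral.integral_of_le h2π]
  apply MeasureTheory.integral_integral_swap
  rw [Function.uncurry_def]
  rw [Measure.prod_restrict]
  apply (hF.continuousOn.integrableOn_compact (isCompact_Icc.prod isCompact_Icc)).mono_set
  exact Set.prod_mono Set.Ioc_subset_Icc_self Set.Ioc_subset_Icc_self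

lemma Dcos (z : ℝ) :
    (∫ θ in (0:ℝ)..(2*π), ∫ φ in (0:ℝ)..(2*π), Real.cos (2*z * (Real.sin θ * Real.sin φ)))
      = S z ^ 2 := by
  have step1 : S z ^ 2 = ∫ u in (0:ℝ)..(2*π), ∫ v in (0:ℝ)..(2*π),
      Real.cos (z * Real.sin u) * Real.cos (z * Real.sin v) := by
    rw [sq]
    conv_lhs => rw [show S z * S z = ∫ u in (0:ℝ)..(2*π), Real.cos (z*Real.sin u) * S z from
      (intervalIntegral.integral_mul_const _ _).symm]
    refine intervalIntegral.integral_congr fun u _ => ?_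
    rw [intervalIntegral.integral_const_mul]; rfl
  have step2 : ∀ u : ℝ, (∫ v in (0:ℝ)..(2*π), Real.cos (z * Real.sin u) * Real.cos (z * Real.sin v))
      = ∫ w in (0:ℝ)..(2*π), Real.cos ((2*z*Real.sin (w/2)) * Real.cos (u - w/2)) := by
    intro u
    set f : ℝ → ℝ := fun v => Real.cos (z*Real.sin u - z*Real.sin v) with hfdef
    set g : ℝ → ℝ := fun v => Real.cos (z*Real.sin u + z*Real.sin v) with hgdef
    have pf : Function.Periodic f (2*π) := by intro x; simp [hfdef, Real.sin_add_two_pi]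
    have pg : Function.Periodic g (2*π) := by intro x; simp [hgdef, Real.sin_add_two_pi]
    have hA : (∫ v in (0:ℝ)..(2*π), f v)
        = ∫ w in (0:ℝ)..(2*π), Real.cos ((2*z*Real.sin (w/2)) * Real.cos (u - w/2)) := by
      have h1 : (∫ x in (0:ℝ)..(2*π), f (u - x)) = ∫ x in u - 2*π..u, f x := by
        simpa using intervalIntegral.integral_comp_sub_left (a := (0:ℝ)) (b := 2*π) f u
      have h2 : (∫ x in u - 2*π..u, f x) = ∫ x in (0:ℝ)..(2*π), f x := by
        simpa using pf.intervalIntegral_add_eq (u - 2*π) 0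
      rw [← h2, ← h1]
      refine intervalIntegral.integral_congr fun w _ => ?_
      show Real.cos (z*Real.sin u - z*Real.sin (u - w)) = _
      rw [show z*Real.sin u - z*Real.sin (u-w) = z*(Real.sin u - Real.sin (u-w)) by ring,
        Real.sin_sub_sin, show (u - (u-w))/2 = w/2 by ring, show (u + (u-w))/2 = u - w/2 by ring]
      ring_nf
    have hB : (∫ v in (0:ℝ)..(2*π), g v)
        = ∫ w in (0:ℝ)..(2*π), Real.cos ((2*z*Real.sin (w/2)) * Real.cos (u - w/2)) := by
      have h1 : (∫ x in (0:ℝ)..(2*π), g (x - u)) = ∫ x in -u..2*π - u, g x := by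
        simpa using intervalIntegral.integral_comp_sub_right (a := (0:ℝ)) (b := 2*π) g u
      have h2 : (∫ x in -u..2*π - u, g x) = ∫ x in (0:ℝ)..(2*π), g x := by
        have := pg.intervalIntegral_add_eq (-u) 0
        rw [show -u + 2*π = 2*π - u by ring] at this
        simpa using this
      rw [← h2, ← h1]
      refine intervalIntegral.integral_congr fun w _ => ?_
      show Real.cos (z*Real.sin u + z*Real.sin (w - u)) = _
      rw [show z*Real.sin u + z*Real.sin (w-u) = z*(Real.sin u - Real.sin (u-w)) by
        rw [show u - w = -(w-u) by ring, Real.sin_neg]; ring,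
        Real.sin_sub_sin, show (u - (u-w))/2 = w/2 by ring, show (u + (u-w))/2 = u - w/2 by ring]
      ring_nf
    have comb : ∀ v : ℝ, Real.cos (z*Real.sin u) * Real.cos (z*Real.sin v) = (f v + g v)/2 := by
      intro v
      have := Real.two_mul_cos_mul_cos (z*Real.sin u) (z*Real.sin v)
      simp only [hfdef, hgdef]
      linarith
    calc (∫ v in (0:ℝ)..(2*π), Real.cos (z * Real.sin u) * Real.cos (z * Real.sin v))
        = ∫ v in (0:ℝ)..(2*π), (f v + g v)/2 := intervalIntegral.integral_congr fun v _ => comb v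
      _ = ((∫ v in (0:ℝ)..(2*π), f v) + ∫ v in (0:ℝ)..(2*π), g v)/2 := by
          rw [intervalIntegral.integral_div, intervalIntegral.integral_add
            ((by fun_prop : Continuous f).intervalIntegrable _ _)
            ((by fun_prop : Continuous g).intervalIntegrable _ _)]
      _ = ∫ w in (0:ℝ)..(2*π), Real.cos ((2*z*Real.sin (w/2)) * Real.cos (u - w/2)) := by
          rw [hA, hB]; ring
  -- assemble
  have pS : Function.Periodic (fun θ => S (2*z*Real.sin θ)) π := by
    intro x
    have : 2*z*Real.sin (x + π) = -(2*z*Real.sin x) := by rw [Real.sin_add_pi]; ring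
    simp only [this, S_neg]
  have step3 : (∫ u in (0:ℝ)..(2*π), ∫ w in (0:ℝ)..(2*π),
        Real.cos ((2*z*Real.sin (w/2)) * Real.cos (u - w/2)))
      = ∫ w in (0:ℝ)..(2*π), S (2*z*Real.sin (w/2)) := by
    rw [swap_int (fun u w => Real.cos ((2*z*Real.sin (w/2)) * Real.cos (u - w/2))) (by fun_prop)]
    exact intervalIntegral.integral_congr fun w _ => cos_cos_int _ _
  have hScont : Continuous (fun θ => S (2*z*Real.sin θ)) := S_cont.comp (by fun_prop)
  have step5 : (∫ w in (0:ℝ)..(2*π), S (2*z*Real.sin (w/2)))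
      = ∫ θ in (0:ℝ)..(2*π), S (2*z*Real.sin θ) := by
    have hdiv := intervalIntegral.integral_comp_div (a := (0:ℝ)) (b := 2*π)
      (f := fun θ => S (2*z*Real.sin θ)) (c := 2) two_ne_zero
    have h2 : (∫ θ in π..2*π, S (2*z*Real.sin θ)) = ∫ θ in (0:ℝ)..π, S (2*z*Real.sin θ) := by
      have := pS.intervalIntegral_add_eq π 0
      rw [show π + π = 2*π by ring] at this
      simpa using this
    have hsplit := intervalIntegral.integral_add_adjacent_intervals
      (a := (0:ℝ)) (b := π) (c := 2*π) (μ := volume)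
      (hScont.intervalIntegrable _ _) (hScont.intervalIntegrable _ _)
    rw [hdiv]
    rw [show (0:ℝ)/2 = 0 by norm_num, show 2*π/2 = π by ring]
    rw [← hsplit, h2]
    simp [two_smul]
    ring
  have step6 : (∫ θ in (0:ℝ)..(2*π), S (2*z*Real.sin θ))
      = ∫ θ in (0:ℝ)..(2*π), ∫ φ in (0:ℝ)..(2*π), Real.cos (2*z * (Real.sin θ * Real.sin φ)) := by
    refine intervalIntegral.integral_congr fun θ _ => ?_
    show (∫ t in (0:ℝ)..(2*π), Real.cos ((2*z*Real.sin θ) * Real.sin t)) = _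
    exact intervalIntegral.integral_congr fun φ _ => by ring_nf
  have step2' : (∫ u in (0:ℝ)..(2*π), ∫ v in (0:ℝ)..(2*π),
        Real.cos (z * Real.sin u) * Real.cos (z * Real.sin v))
      = ∫ u in (0:ℝ)..(2*π), ∫ w in (0:ℝ)..(2*π),
        Real.cos ((2*z*Real.sin (w/2)) * Real.cos (u - w/2)) :=
    intervalIntegral.integral_congr fun u _ => step2 u
  rw [step1, step2', step3, step5, step6]

lemma Dcos' (x : ℝ) :
    (∫ θ in (0:ℝ)..(2*π), ∫ φ in (0:ℝ)..(2*π), Real.cos (x * (Real.sin θ * Real.sin φ)))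
      = (2*π)^2 * J₀ (x/2)^2 := by
  have h := Dcos (x/2)
  rw [show 2*(x/2) = x by ring] at h
  rw [h, S_eq]; ring

lemma Dmix (A B x : ℝ) :
    (∫ θ in (0:ℝ)..(2*π), ∫ φ in (0:ℝ)..(2*π),
        (A * Real.cos (x * (Real.sin θ * Real.sin φ))
          + B * Real.sin (x * (Real.sin θ * Real.sin φ))))
      = A * ((2*π)^2 * J₀ (x/2)^2) := by
  have inner : ∀ θ : ℝ, (∫ φ in (0:ℝ)..(2*π),
      (A * Real.cos (x * (Real.sin θ * Real.sin φ))
        + B * Real.sin (x * (Real.sin θ * Real.sin φ))))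
      = A * ∫ φ in (0:ℝ)..(2*π), Real.cos (x * (Real.sin θ * Real.sin φ)) := by
    intro θ
    have hs : (∫ φ in (0:ℝ)..(2*π), Real.sin (x * (Real.sin θ * Real.sin φ))) = 0 := by
      refine Eq.trans ?_ (sin_int (x * Real.sin θ))
      exact intervalIntegral.integral_congr fun φ _ => by ring_nf
    rw [intervalIntegral.integral_add
      ((by fun_prop : Continuous fun φ => A * Real.cos (x * (Real.sin θ * Real.sin φ))).intervalIntegrable _ _)
      ((by fun_prop : Continuous fun φ => B * Real.sin (x * (Real.sin θ * Real.sin φ))).intervalIntegrable _ _),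
      intervalIntegral.integral_const_mul, intervalIntegral.integral_const_mul, hs,
      mul_zero, add_zero]
  have houter : (∫ θ in (0:ℝ)..(2*π), ∫ φ in (0:ℝ)..(2*π),
      (A * Real.cos (x * (Real.sin θ * Real.sin φ))
        + B * Real.sin (x * (Real.sin θ * Real.sin φ))))
      = ∫ θ in (0:ℝ)..(2*π),
          A * ∫ φ in (0:ℝ)..(2*π), Real.cos (x * (Real.sin θ * Real.sin φ)) :=
    intervalIntegral.integral_congr fun θ _ => inner θ
  rw [houter, intervalIntegral.integral_const_mul, Dcos']

lemma Dcos_mul (A x : ℝ) :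
    (∫ θ in (0:ℝ)..(2*π), ∫ φ in (0:ℝ)..(2*π),
        A * Real.cos (x * (Real.sin θ * Real.sin φ)))
      = A * ((2*π)^2 * J₀ (x/2)^2) := by
  rw [← Dmix A 0 x]
  refine intervalIntegral.integral_congr fun θ _ => ?_
  refine intervalIntegral.integral_congr fun φ _ => by ring

lemma I2_sum (s : Finset ℕ) (f : ℕ → ℝ → ℝ → ℝ)
    (hf : ∀ i, Continuous fun p : ℝ × ℝ => f i p.1 p.2) :
    (∫ θ in (0:ℝ)..(2*π), ∫ φ in (0:ℝ)..(2*π), ∑ i ∈ s, f i θ φ)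
      = ∑ i ∈ s, ∫ θ in (0:ℝ)..(2*π), ∫ φ in (0:ℝ)..(2*π), f i θ φ := by
  have h1 : ∀ θ : ℝ, (∫ φ in (0:ℝ)..(2*π), ∑ i ∈ s, f i θ φ)
      = ∑ i ∈ s, ∫ φ in (0:ℝ)..(2*π), f i θ φ := fun θ =>
    intervalIntegral.integral_finset_sum fun i _ =>
      ((hf i).comp (Continuous.prodMk_right θ)).intervalIntegrable _ _
  rw [intervalIntegral.integral_congr (fun θ _ => h1 θ)]
  exact intervalIntegral.integral_finset_sum fun i _ =>
    (intervalIntegral.continuous_parametric_intervalIntegral_of_continuous' (hf i) _ _).intervalIntegrable _ _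

lemma J0_even (x : ℝ) : J₀ (-x) = J₀ x := by
  unfold J₀
  congr 1
  refine intervalIntegral.integral_congr fun t _ => ?_
  simp [neg_mul]

lemma I2_const (C : ℝ) :
    (∫ θ in (0:ℝ)..(2*π), ∫ φ in (0:ℝ)..(2*π), C) = (2*π)^2 * C := by
  simp [intervalIntegral.integral_const]
  ring

lemma I2_add (f g : ℝ → ℝ → ℝ) (hf : Continuous fun p : ℝ × ℝ => f p.1 p.2)
    (hg : Continuous fun p : ℝ × ℝ => g p.1 p.2) :
    (∫ θ in (0:ℝ)..(2*π), ∫ φ in (0:ℝ)..(2*π), (f θ φ + g θ φ))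
      = (∫ θ in (0:ℝ)..(2*π), ∫ φ in (0:ℝ)..(2*π), f θ φ)
        + ∫ θ in (0:ℝ)..(2*π), ∫ φ in (0:ℝ)..(2*π), g θ φ := by
  have h1 : ∀ θ : ℝ, (∫ φ in (0:ℝ)..(2*π), (f θ φ + g θ φ))
      = (∫ φ in (0:ℝ)..(2*π), f θ φ) + ∫ φ in (0:ℝ)..(2*π), g θ φ := fun θ =>
    intervalIntegral.integral_add
      ((hf.comp (Continuous.prodMk_right θ)).intervalIntegrable _ _)
      ((hg.comp (Continuous.prodMk_right θ)).intervalIntegrable _ _)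
  rw [intervalIntegral.integral_congr (fun θ _ => h1 θ)]
  exact intervalIntegral.integral_add
    ((intervalIntegral.continuous_parametric_intervalIntegral_of_continuous' hf _ _).intervalIntegrable _ _)
    ((intervalIntegral.continuous_parametric_intervalIntegral_of_continuous' hg _ _).intervalIntegrable _ _)

lemma Dmix2 (A₁ B₁ x₁ A₂ B₂ x₂ : ℝ) :
    (∫ θ in (0:ℝ)..(2*π), ∫ φ in (0:ℝ)..(2*π),
        (A₁ * Real.cos (x₁ * (Real.sin θ * Real.sin φ))
          + B₁ * Real.sin (x₁ * (Real.sin θ * Real.sin φ))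
          + (A₂ * Real.cos (x₂ * (Real.sin θ * Real.sin φ))
             + B₂ * Real.sin (x₂ * (Real.sin θ * Real.sin φ)))))
      = A₁ * ((2*π)^2 * J₀ (x₁/2)^2) + A₂ * ((2*π)^2 * J₀ (x₂/2)^2) := by
  rw [I2_add _ _ (by fun_prop) (by fun_prop), Dmix, Dmix]

lemma inner3 (aa : ℝ) (F : Finset ℕ) (w : ℕ → ℝ) (h : ℝ) :
    (∫ θ in (0:ℝ)..(2*π), ∫ φ in (0:ℝ)..(2*π),
        ∑ s ∈ F, w s * Real.cos ((s:ℝ) * aa * (h - Real.sin θ * Real.sin φ)))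
      = ∑ s ∈ F, (w s * ((2*π)^2 * J₀ ((s:ℝ)*aa/2)^2)) * Real.cos ((s:ℝ)*aa*h) := by
  have point : ∀ (s : ℕ) (θ φ : ℝ),
      w s * Real.cos ((s:ℝ)*aa*(h - Real.sin θ * Real.sin φ))
        = (w s * Real.cos ((s:ℝ)*aa*h)) * Real.cos (((s:ℝ)*aa) * (Real.sin θ * Real.sin φ))
          + (w s * Real.sin ((s:ℝ)*aa*h)) * Real.sin (((s:ℝ)*aa) * (Real.sin θ * Real.sin φ)) := by
    intro s θ φ
    rw [show (s:ℝ)*aa*(h - Real.sin θ * Real.sin φ)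
        = (s:ℝ)*aa*h - ((s:ℝ)*aa) * (Real.sin θ * Real.sin φ) by ring, Real.cos_sub]
    ring
  rw [intervalIntegral.integral_congr (fun θ (_ : θ ∈ _) => intervalIntegral.integral_congr
      fun φ _ => Finset.sum_congr rfl fun s _ => point s θ φ)]
  rw [I2_sum F _ (fun i => by fun_prop)]
  exact Finset.sum_congr rfl fun s _ => by rw [Dmix]; ring

lemma pi6_ne : ((2*π)^6 : ℝ) ≠ 0 := by positivity

-- E[G1] : integrand depends on (θ₁,φ₁,θ₃,φ₃)
lemma Esingle1 (aa : ℝ) (F : Finset ℕ) (w : ℕ → ℝ) :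
    (1/(2*π)^6) * (∫ θ₁ in (0:ℝ)..(2*π), ∫ φ₁ in (0:ℝ)..(2*π),
      ∫ θ₂ in (0:ℝ)..(2*π), ∫ φ₂ in (0:ℝ)..(2*π),
        ∫ θ₃ in (0:ℝ)..(2*π), ∫ φ₃ in (0:ℝ)..(2*π),
          ∑ s ∈ F, w s * Real.cos ((s:ℝ) * aa *
            (Real.sin θ₁ * Real.sin φ₁ - Real.sin θ₃ * Real.sin φ₃)))
      = ∑ s ∈ F, w s * J₀ ((s:ℝ)*aa/2)^4 := by
  have e1 : (∫ θ₁ in (0:ℝ)..(2*π), ∫ φ₁ in (0:ℝ)..(2*π),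
      ∫ θ₂ in (0:ℝ)..(2*π), ∫ φ₂ in (0:ℝ)..(2*π),
        ∫ θ₃ in (0:ℝ)..(2*π), ∫ φ₃ in (0:ℝ)..(2*π),
          ∑ s ∈ F, w s * Real.cos ((s:ℝ) * aa *
            (Real.sin θ₁ * Real.sin φ₁ - Real.sin θ₃ * Real.sin φ₃)))
      = ∫ θ₁ in (0:ℝ)..(2*π), ∫ φ₁ in (0:ℝ)..(2*π),
          ∑ s ∈ F, ((2*π)^2 * (w s * ((2*π)^2 * J₀ ((s:ℝ)*aa/2)^2)))
            * Real.cos ((s:ℝ)*aa*(Real.sin θ₁ * Real.sin φ₁)) := by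
    refine intervalIntegral.integral_congr fun θ₁ _ => ?_
    refine intervalIntegral.integral_congr fun φ₁ _ => ?_
    rw [intervalIntegral.integral_congr (fun θ₂ (_ : θ₂ ∈ _) =>
      intervalIntegral.integral_congr fun φ₂ _ => inner3 aa F w (Real.sin θ₁ * Real.sin φ₁))]
    rw [I2_const, Finset.mul_sum]
    exact Finset.sum_congr rfl fun s _ => by ring
  rw [e1, I2_sum F _ (fun i => by fun_prop)]
  rw [show (∑ s ∈ F, ∫ θ in (0:ℝ)..(2*π), ∫ φ in (0:ℝ)..(2*π),
      ((2*π)^2 * (w s * ((2*π)^2 * J₀ ((s:ℝ)*aa/2)^2)))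
        * Real.cos ((s:ℝ)*aa*(Real.sin θ * Real.sin φ)))
    = ∑ s ∈ F, ((2*π)^2 * (w s * ((2*π)^2 * J₀ ((s:ℝ)*aa/2)^2)))
        * ((2*π)^2 * J₀ ((s:ℝ)*aa/2)^2) from
    Finset.sum_congr rfl fun s _ => Dcos_mul _ _]
  rw [Finset.mul_sum]
  refine Finset.sum_congr rfl fun s _ => ?_
  have h6 := pi6_ne
  field_simp

-- the inner four-fold integral used for E[G2]
lemma four_int (aa : ℝ) (F : Finset ℕ) (w : ℕ → ℝ) :
    (∫ θ in (0:ℝ)..(2*π), ∫ φ in (0:ℝ)..(2*π),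
      ∫ θ' in (0:ℝ)..(2*π), ∫ φ' in (0:ℝ)..(2*π),
        ∑ s ∈ F, w s * Real.cos ((s:ℝ) * aa *
          (Real.sin θ * Real.sin φ - Real.sin θ' * Real.sin φ')))
      = ∑ s ∈ F, w s * (2*π)^4 * J₀ ((s:ℝ)*aa/2)^4 := by
  rw [intervalIntegral.integral_congr (fun θ (_ : θ ∈ _) =>
    intervalIntegral.integral_congr fun φ _ => inner3 aa F w (Real.sin θ * Real.sin φ))]
  rw [I2_sum F _ (fun i => by fun_prop)]
  refine Finset.sum_congr rfl fun s _ => ?_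
  rw [Dcos_mul]
  ring

lemma Esingle2 (aa : ℝ) (F : Finset ℕ) (w : ℕ → ℝ) :
    (1/(2*π)^6) * (∫ θ₁ in (0:ℝ)..(2*π), ∫ φ₁ in (0:ℝ)..(2*π),
      ∫ θ₂ in (0:ℝ)..(2*π), ∫ φ₂ in (0:ℝ)..(2*π),
        ∫ θ₃ in (0:ℝ)..(2*π), ∫ φ₃ in (0:ℝ)..(2*π),
          ∑ s ∈ F, w s * Real.cos ((s:ℝ) * aa *
            (Real.sin θ₂ * Real.sin φ₂ - Real.sin θ₃ * Real.sin φ₃)))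
      = ∑ s ∈ F, w s * J₀ ((s:ℝ)*aa/2)^4 := by
  have e1 : (∫ θ₁ in (0:ℝ)..(2*π), ∫ φ₁ in (0:ℝ)..(2*π),
      ∫ θ₂ in (0:ℝ)..(2*π), ∫ φ₂ in (0:ℝ)..(2*π),
        ∫ θ₃ in (0:ℝ)..(2*π), ∫ φ₃ in (0:ℝ)..(2*π),
          ∑ s ∈ F, w s * Real.cos ((s:ℝ) * aa *
            (Real.sin θ₂ * Real.sin φ₂ - Real.sin θ₃ * Real.sin φ₃)))
      = ∫ θ₁ in (0:ℝ)..(2*π), ∫ φ₁ in (0:ℝ)..(2*π),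
          ∑ s ∈ F, w s * (2*π)^4 * J₀ ((s:ℝ)*aa/2)^4 := by
    refine intervalIntegral.integral_congr fun θ₁ _ => ?_
    refine intervalIntegral.integral_congr fun φ₁ _ => ?_
    exact four_int aa F w
  rw [e1, I2_const, Finset.mul_sum, Finset.mul_sum]
  refine Finset.sum_congr rfl fun s _ => ?_
  have h6 := pi6_ne
  field_simp

lemma inner3prod (aa : ℝ) (F : Finset ℕ) (w : ℕ → ℝ) (h₁ h₂ : ℝ) :
    (∫ θ in (0:ℝ)..(2*π), ∫ φ in (0:ℝ)..(2*π),
      (∑ s ∈ F, w s * Real.cos ((s:ℝ)*aa*(h₁ - Real.sin θ * Real.sin φ)))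
        * (∑ s ∈ F, w s * Real.cos ((s:ℝ)*aa*(h₂ - Real.sin θ * Real.sin φ))))
    = ∑ s₁ ∈ F, ∑ s₂ ∈ F,
        ((w s₁ * w s₂/2) *
          (Real.cos ((s₁:ℝ)*aa*h₁ - (s₂:ℝ)*aa*h₂)
              * ((2*π)^2 * J₀ (((s₁:ℝ)*aa - (s₂:ℝ)*aa)/2)^2)
            + Real.cos ((s₁:ℝ)*aa*h₁ + (s₂:ℝ)*aa*h₂)
              * ((2*π)^2 * J₀ (((s₁:ℝ)*aa + (s₂:ℝ)*aa)/2)^2))) := by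
  have point : ∀ θ φ : ℝ,
      (∑ s ∈ F, w s * Real.cos ((s:ℝ)*aa*(h₁ - Real.sin θ * Real.sin φ)))
        * (∑ s ∈ F, w s * Real.cos ((s:ℝ)*aa*(h₂ - Real.sin θ * Real.sin φ)))
      = ∑ s₁ ∈ F, ∑ s₂ ∈ F,
          (((w s₁ * w s₂/2) * Real.cos ((s₁:ℝ)*aa*h₁ - (s₂:ℝ)*aa*h₂))
              * Real.cos (((s₁:ℝ)*aa - (s₂:ℝ)*aa) * (Real.sin θ * Real.sin φ))
            + ((w s₁ * w s₂/2) * Real.sin ((s₁:ℝ)*aa*h₁ - (s₂:ℝ)*aa*h₂))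
              * Real.sin (((s₁:ℝ)*aa - (s₂:ℝ)*aa) * (Real.sin θ * Real.sin φ))
            + (((w s₁ * w s₂/2) * Real.cos ((s₁:ℝ)*aa*h₁ + (s₂:ℝ)*aa*h₂))
                * Real.cos (((s₁:ℝ)*aa + (s₂:ℝ)*aa) * (Real.sin θ * Real.sin φ))
              + ((w s₁ * w s₂/2) * Real.sin ((s₁:ℝ)*aa*h₁ + (s₂:ℝ)*aa*h₂))
                * Real.sin (((s₁:ℝ)*aa + (s₂:ℝ)*aa) * (Real.sin θ * Real.sin φ)))) := by
    intro θ φ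
    rw [Finset.sum_mul_sum]
    refine Finset.sum_congr rfl fun s₁ _ => Finset.sum_congr rfl fun s₂ _ => ?_
    set p := Real.sin θ * Real.sin φ
    set c₁ := (s₁:ℝ)*aa; set c₂ := (s₂:ℝ)*aa
    calc (w s₁ * Real.cos (c₁*(h₁ - p))) * (w s₂ * Real.cos (c₂*(h₂ - p)))
        = (w s₁ * w s₂/2) * (2 * Real.cos (c₁*(h₁-p)) * Real.cos (c₂*(h₂-p))) := by ring
      _ = (w s₁ * w s₂/2) * (Real.cos (c₁*(h₁-p) - c₂*(h₂-p))
            + Real.cos (c₁*(h₁-p) + c₂*(h₂-p))) := by rw [Real.two_mul_cos_mul_cos]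
      _ = _ := by
          rw [show c₁*(h₁-p) - c₂*(h₂-p) = (c₁*h₁ - c₂*h₂) - (c₁-c₂)*p by ring,
            show c₁*(h₁-p) + c₂*(h₂-p) = (c₁*h₁ + c₂*h₂) - (c₁+c₂)*p by ring,
            Real.cos_sub (c₁*h₁ - c₂*h₂) ((c₁-c₂)*p),
            Real.cos_sub (c₁*h₁ + c₂*h₂) ((c₁+c₂)*p)]
          ring
  rw [intervalIntegral.integral_congr (fun θ (_ : θ ∈ _) =>
    intervalIntegral.integral_congr fun φ _ => point θ φ)]
  rw [I2_sum F _ (fun i => continuous_finset_sum _ fun j _ => by fun_prop)]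
  refine Finset.sum_congr rfl fun s₁ _ => ?_
  rw [I2_sum F _ (fun j => by fun_prop)]
  refine Finset.sum_congr rfl fun s₂ _ => ?_
  rw [Dmix2]
  ring

lemma mid_int (aa : ℝ) (F : Finset ℕ) (w : ℕ → ℝ) (h₁ : ℝ) :
    (∫ θ in (0:ℝ)..(2*π), ∫ φ in (0:ℝ)..(2*π),
      ∑ s₁ ∈ F, ∑ s₂ ∈ F,
        ((w s₁ * w s₂/2) *
          (Real.cos ((s₁:ℝ)*aa*h₁ - (s₂:ℝ)*aa*(Real.sin θ * Real.sin φ))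
              * ((2*π)^2 * J₀ (((s₁:ℝ)*aa - (s₂:ℝ)*aa)/2)^2)
            + Real.cos ((s₁:ℝ)*aa*h₁ + (s₂:ℝ)*aa*(Real.sin θ * Real.sin φ))
              * ((2*π)^2 * J₀ (((s₁:ℝ)*aa + (s₂:ℝ)*aa)/2)^2))))
    = ∑ s₁ ∈ F, ∑ s₂ ∈ F,
        ((w s₁ * w s₂/2) *
          (((2*π)^2 * J₀ (((s₁:ℝ)*aa - (s₂:ℝ)*aa)/2)^2)
            + ((2*π)^2 * J₀ (((s₁:ℝ)*aa + (s₂:ℝ)*aa)/2)^2))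
          * ((2*π)^2 * J₀ ((s₂:ℝ)*aa/2)^2)) * Real.cos ((s₁:ℝ)*aa*h₁) := by
  have point : ∀ (s₁ s₂ : ℕ) (θ φ : ℝ),
      ((w s₁ * w s₂/2) *
          (Real.cos ((s₁:ℝ)*aa*h₁ - (s₂:ℝ)*aa*(Real.sin θ * Real.sin φ))
              * ((2*π)^2 * J₀ (((s₁:ℝ)*aa - (s₂:ℝ)*aa)/2)^2)
            + Real.cos ((s₁:ℝ)*aa*h₁ + (s₂:ℝ)*aa*(Real.sin θ * Real.sin φ))
              * ((2*π)^2 * J₀ (((s₁:ℝ)*aa + (s₂:ℝ)*aa)/2)^2)))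
      = ((w s₁ * w s₂/2) * (((2*π)^2 * J₀ (((s₁:ℝ)*aa - (s₂:ℝ)*aa)/2)^2)
            + ((2*π)^2 * J₀ (((s₁:ℝ)*aa + (s₂:ℝ)*aa)/2)^2)) * Real.cos ((s₁:ℝ)*aa*h₁))
          * Real.cos (((s₂:ℝ)*aa) * (Real.sin θ * Real.sin φ))
        + ((w s₁ * w s₂/2) * (((2*π)^2 * J₀ (((s₁:ℝ)*aa - (s₂:ℝ)*aa)/2)^2)
            - ((2*π)^2 * J₀ (((s₁:ℝ)*aa + (s₂:ℝ)*aa)/2)^2)) * Real.sin ((s₁:ℝ)*aa*h₁))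
          * Real.sin (((s₂:ℝ)*aa) * (Real.sin θ * Real.sin φ)) := by
    intro s₁ s₂ θ φ
    rw [Real.cos_sub ((s₁:ℝ)*aa*h₁) ((s₂:ℝ)*aa*(Real.sin θ * Real.sin φ)),
      Real.cos_add ((s₁:ℝ)*aa*h₁) ((s₂:ℝ)*aa*(Real.sin θ * Real.sin φ))]
    ring
  rw [intervalIntegral.integral_congr (fun θ (_ : θ ∈ _) =>
    intervalIntegral.integral_congr fun φ _ => Finset.sum_congr rfl fun s₁ _ =>
      Finset.sum_congr rfl fun s₂ _ => point s₁ s₂ θ φ)]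
  rw [I2_sum F _ (fun i => continuous_finset_sum _ fun j _ => by fun_prop)]
  refine Finset.sum_congr rfl fun s₁ _ => ?_
  rw [I2_sum F _ (fun j => by fun_prop)]
  refine Finset.sum_congr rfl fun s₂ _ => ?_
  rw [Dmix]
  ring

lemma Eprod (aa : ℝ) (F : Finset ℕ) (w : ℕ → ℝ) :
    (1/(2*π)^6) * (∫ θ₁ in (0:ℝ)..(2*π), ∫ φ₁ in (0:ℝ)..(2*π),
      ∫ θ₂ in (0:ℝ)..(2*π), ∫ φ₂ in (0:ℝ)..(2*π),
        ∫ θ₃ in (0:ℝ)..(2*π), ∫ φ₃ in (0:ℝ)..(2*π),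
          (∑ s ∈ F, w s * Real.cos ((s:ℝ) * aa *
            (Real.sin θ₁ * Real.sin φ₁ - Real.sin θ₃ * Real.sin φ₃)))
          * (∑ s ∈ F, w s * Real.cos ((s:ℝ) * aa *
            (Real.sin θ₂ * Real.sin φ₂ - Real.sin θ₃ * Real.sin φ₃))))
    = ∑ s₁ ∈ F, ∑ s₂ ∈ F,
        w s₁ * w s₂ * (J₀ ((s₁:ℝ)*aa/2)^2 * J₀ ((s₂:ℝ)*aa/2)^2 / 2)
          * (J₀ (((s₁:ℝ)*aa + (s₂:ℝ)*aa)/2)^2 + J₀ (((s₁:ℝ)*aa - (s₂:ℝ)*aa)/2)^2) := by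
  have e1 : (∫ θ₁ in (0:ℝ)..(2*π), ∫ φ₁ in (0:ℝ)..(2*π),
      ∫ θ₂ in (0:ℝ)..(2*π), ∫ φ₂ in (0:ℝ)..(2*π),
        ∫ θ₃ in (0:ℝ)..(2*π), ∫ φ₃ in (0:ℝ)..(2*π),
          (∑ s ∈ F, w s * Real.cos ((s:ℝ) * aa *
            (Real.sin θ₁ * Real.sin φ₁ - Real.sin θ₃ * Real.sin φ₃)))
          * (∑ s ∈ F, w s * Real.cos ((s:ℝ) * aa *
            (Real.sin θ₂ * Real.sin φ₂ - Real.sin θ₃ * Real.sin φ₃))))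
      = ∫ θ₁ in (0:ℝ)..(2*π), ∫ φ₁ in (0:ℝ)..(2*π),
          ∑ s₁ ∈ F, ∑ s₂ ∈ F,
            ((w s₁ * w s₂/2) *
              (((2*π)^2 * J₀ (((s₁:ℝ)*aa - (s₂:ℝ)*aa)/2)^2)
                + ((2*π)^2 * J₀ (((s₁:ℝ)*aa + (s₂:ℝ)*aa)/2)^2))
              * ((2*π)^2 * J₀ ((s₂:ℝ)*aa/2)^2))
            * Real.cos ((s₁:ℝ)*aa*(Real.sin θ₁ * Real.sin φ₁)) := by
    refine intervalIntegral.integral_congr fun θ₁ _ => ?_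
    refine intervalIntegral.integral_congr fun φ₁ _ => ?_
    rw [intervalIntegral.integral_congr (fun θ₂ (_ : θ₂ ∈ _) =>
      intervalIntegral.integral_congr fun φ₂ _ =>
        inner3prod aa F w (Real.sin θ₁ * Real.sin φ₁) (Real.sin θ₂ * Real.sin φ₂))]
    exact mid_int aa F w (Real.sin θ₁ * Real.sin φ₁)
  rw [e1]
  rw [I2_sum F _ (fun i => continuous_finset_sum _ fun j _ => by fun_prop)]
  rw [Finset.mul_sum]
  refine Finset.sum_congr rfl fun s₁ _ => ?_
  rw [I2_sum F _ (fun j => by fun_prop)]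
  rw [Finset.mul_sum]
  refine Finset.sum_congr rfl fun s₂ _ => ?_
  rw [Dcos_mul]
  have h6 := pi6_ne
  field_simp
  ring


theorem stmt_11 (a : ℝ) (nR : ℕ) (hR : 1 ≤ nR) :
    E6 (fun θ₁ φ₁ θ₂ φ₂ θ₃ φ₃ =>
      (∑ s ∈ Finset.Icc 1 (nR - 1), ((nR : ℝ) - s) *
        Real.cos ((s : ℝ) * a *
          (Real.sin θ₁ * Real.sin φ₁ - Real.sin θ₃ * Real.sin φ₃))) *
      (∑ s ∈ Finset.Icc 1 (nR - 1), ((nR : ℝ) - s) *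
        Real.cos ((s : ℝ) * a *
          (Real.sin θ₂ * Real.sin φ₂ - Real.sin θ₃ * Real.sin φ₃)))) -
    E6 (fun θ₁ φ₁ _θ₂ _φ₂ θ₃ φ₃ =>
      ∑ s ∈ Finset.Icc 1 (nR - 1), ((nR : ℝ) - s) *
        Real.cos ((s : ℝ) * a *
          (Real.sin θ₁ * Real.sin φ₁ - Real.sin θ₃ * Real.sin φ₃))) *
    E6 (fun _θ₁ _φ₁ θ₂ φ₂ θ₃ φ₃ =>
      ∑ s ∈ Finset.Icc 1 (nR - 1), ((nR : ℝ) - s) *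
        Real.cos ((s : ℝ) * a *
          (Real.sin θ₂ * Real.sin φ₂ - Real.sin θ₃ * Real.sin φ₃)))
    = (∑ s₂ ∈ Finset.Icc 1 (nR - 1), ∑ s₁ ∈ Finset.Icc 1 (nR - 1),
        ((nR : ℝ) - s₁) * ((nR : ℝ) - s₂) *
          ((J₀ ((s₁ : ℝ) * a / 2)) ^ 2 * (J₀ ((s₂ : ℝ) * a / 2)) ^ 2 / 2) *
          ((J₀ (((s₁ : ℝ) + (s₂ : ℝ)) * a / 2)) ^ 2 +
           (J₀ (|(s₁ : ℝ) - (s₂ : ℝ)| * a / 2)) ^ 2)) -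
      (∑ s ∈ Finset.Icc 1 (nR - 1), ((nR : ℝ) - s) * (J₀ ((s : ℝ) * a / 2)) ^ 4) ^ 2 := by
  have habs : ∀ d : ℝ, J₀ (|d| * a / 2)^2 = J₀ (d * a / 2)^2 := by
    intro d
    rcases abs_cases d with ⟨h, _⟩ | ⟨h, _⟩
    · rw [h]
    · rw [h, show -d*a/2 = -(d*a/2) by ring, J0_even]
  simp only [E6]
  rw [Eprod a (Finset.Icc 1 (nR-1)) (fun s => (nR:ℝ) - (s:ℕ)),
    Esingle1 a (Finset.Icc 1 (nR-1)) (fun s => (nR:ℝ) - (s:ℕ)),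
    Esingle2 a (Finset.Icc 1 (nR-1)) (fun s => (nR:ℝ) - (s:ℕ))]
  rw [sq, Finset.sum_comm]
  congr 1
  refine Finset.sum_congr rfl fun s₂ _ => Finset.sum_congr rfl fun s₁ _ => ?_
  rw [show ((s₁:ℝ)*a + (s₂:ℝ)*a)/2 = ((s₁:ℝ)+(s₂:ℝ))*a/2 by ring,
    show ((s₁:ℝ)*a - (s₂:ℝ)*a)/2 = ((s₁:ℝ)-(s₂:ℝ))*a/2 by ring,
    habs ((s₁:ℝ)-(s₂:ℝ))]
end

section
/- Let (θᵢ, φᵢ), i = 1, 2, 3, be independent, each uniformly distributed on [0,2π]², set hᵢ := sin θᵢ·sin φᵢ, and fix reals a, c₁, c₂, c₃. Then E[cos(a·(c₁·h₁ + c₂·h₂ + c₃·h₃))] = E[cos(a·c₁·h₁)]·E[cos(a·c₂·h₂)]·E[cos(a·c₃·h₃)] = J₀(c₁·a/2)²·J₀(c₂·a/2)²·J₀(c₃·a/2)². -/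
open Real MeasureTheory Finset

/-- Expectation over one pair of angles, uniform on `[0, 2π]²`. -/
noncomputable def E2 (f : ℝ → ℝ → ℝ) : ℝ :=
  (1 / (2 * π) ^ 2) *
    ∫ θ in (0:ℝ)..(2 * π), ∫ φ in (0:ℝ)..(2 * π), f θ φ

/- ### Auxiliary lemmas -/

lemma antiper_int_zero (f : ℝ → ℝ) (hc : Continuous f) (h : ∀ x, f (x + π) = - f x) :
    ∫ x in (0:ℝ)..(2 * π), f x = 0 := by
  have h2 : ∫ x in (0:ℝ)..π, f (x + π) = ∫ x in π..(2 * π), f x := by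
    simpa [two_mul] using intervalIntegral.integral_comp_add_right f π
  have h3 : ∫ x in (0:ℝ)..π, f (x + π) = - ∫ x in (0:ℝ)..π, f x := by
    simp only [h]
    rw [intervalIntegral.integral_neg]
  have h4 : (∫ x in (0:ℝ)..π, f x) + ∫ x in π..(2 * π), f x = ∫ x in (0:ℝ)..(2 * π), f x :=
    intervalIntegral.integral_add_adjacent_intervals
      (hc.intervalIntegrable _ _) (hc.intervalIntegrable _ _)
  rw [← h4, ← h2, h3]; ring

lemma sin_sin_int_zero (k : ℝ) :
    ∫ x in (0:ℝ)..(2 * π), Real.sin (k * Real.sin x) = 0 := by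
  apply antiper_int_zero _ (by continuity)
  intro x
  simp [Real.sin_add]

lemma sin_cos_int_zero (k : ℝ) :
    ∫ x in (0:ℝ)..(2 * π), Real.sin (k * Real.cos x) = 0 := by
  apply antiper_int_zero _ (by continuity)
  intro x
  simp [Real.cos_add]

lemma per_shift (f : ℝ → ℝ) (hp : Function.Periodic f (2 * π)) (c : ℝ) :
    ∫ x in (0:ℝ)..(2 * π), f (x + c) = ∫ x in (0:ℝ)..(2 * π), f x := by
  rw [intervalIntegral.integral_comp_add_right]
  have := hp.intervalIntegral_add_eq c 0
  simpa [add_comm] using this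

/-- Fubini for continuous functions on `[0,2π]²`. -/
lemma swap2 (f : ℝ → ℝ → ℝ) (hf : Continuous fun p : ℝ × ℝ => f p.1 p.2) :
    ∫ x in (0:ℝ)..(2 * π), ∫ y in (0:ℝ)..(2 * π), f x y
      = ∫ y in (0:ℝ)..(2 * π), ∫ x in (0:ℝ)..(2 * π), f x y := by
  have h2π : (0:ℝ) ≤ 2 * π := by positivity
  simp only [intervalIntegral.integral_of_le h2π]
  have hint : Integrable (Function.uncurry f)
      ((volume.restrict (Set.Ioc 0 (2 * π))).prod (volume.restrict (Set.Ioc 0 (2 * π)))) := by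
    rw [Measure.prod_restrict]
    have : IntegrableOn (Function.uncurry f)
        (Set.Icc (0:ℝ) (2 * π) ×ˢ Set.Icc (0:ℝ) (2 * π)) (volume.prod volume) := by
      rw [← Measure.volume_eq_prod]
      exact hf.continuousOn.integrableOn_compact (isCompact_Icc.prod isCompact_Icc)
    exact this.mono_set (Set.prod_mono Set.Ioc_subset_Icc_self Set.Ioc_subset_Icc_self)
  exact MeasureTheory.integral_integral_swap hint

/-- Inner factorization: the double integral of `cos (X + b sinθ sinφ)` factors. -/
lemma cos_factor (X b : ℝ) :
    ∫ θ in (0:ℝ)..(2 * π), ∫ φ in (0:ℝ)..(2 * π), Real.cos (X + b * (Real.sin θ * Real.sin φ))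
      = Real.cos X *
        ∫ θ in (0:ℝ)..(2 * π), ∫ φ in (0:ℝ)..(2 * π), Real.cos (b * (Real.sin θ * Real.sin φ)) := by
  rw [← intervalIntegral.integral_const_mul]
  apply intervalIntegral.integral_congr
  intro θ _
  have key : ∀ φ, Real.cos (X + b * (Real.sin θ * Real.sin φ))
      = Real.cos X * Real.cos (b * (Real.sin θ * Real.sin φ))
        - Real.sin X * Real.sin ((b * Real.sin θ) * Real.sin φ) := by
    intro φ; rw [Real.cos_add]; ring_nf
  simp only [key]
  rw [intervalIntegral.integral_sub (by apply Continuous.intervalIntegrable; continuity)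
      (by apply Continuous.intervalIntegrable; continuity),
    intervalIntegral.integral_const_mul, intervalIntegral.integral_const_mul,
    sin_sin_int_zero]
  ring

set_option maxHeartbeats 1000000 in
/-- The core Bessel product formula at the level of unnormalized integrals. -/
lemma bessel_core (b : ℝ) :
    ∫ θ in (0:ℝ)..(2 * π), ∫ φ in (0:ℝ)..(2 * π), Real.cos (b * (Real.sin θ * Real.sin φ))
      = (∫ t in (0:ℝ)..(2 * π), Real.cos (b / 2 * Real.cos t)) ^ 2 := by
  set z := b / 2 with hz
  set g : ℝ → ℝ := fun t => Real.cos (z * Real.cos t) with hg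
  set s : ℝ → ℝ := fun t => Real.sin (z * Real.cos t) with hs
  have hgc : Continuous g := by continuity
  have hsc : Continuous s := by continuity
  have hgp : Function.Periodic g (2 * π) := fun x => by simp [hg, Real.cos_add]
  have hsp : Function.Periodic s (2 * π) := fun x => by simp [hs, Real.cos_add]
  -- pointwise product-to-sum identity
  have key : ∀ θ φ : ℝ, Real.cos (b * (Real.sin θ * Real.sin φ))
      = g (θ - φ) * g (θ + φ) + s (θ - φ) * s (θ + φ) := by
    intro θ φ
    have h1 : b * (Real.sin θ * Real.sin φ)
        = z * Real.cos (θ - φ) - z * Real.cos (θ + φ) := by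
      rw [Real.cos_sub, Real.cos_add, hz]; ring
    rw [h1, Real.cos_sub]
  -- step 1: rewrite inner integral via shift
  have step1 : ∀ θ : ℝ,
      (∫ φ in (0:ℝ)..(2 * π), Real.cos (b * (Real.sin θ * Real.sin φ)))
        = ∫ t in (0:ℝ)..(2 * π), (g t * g (t + 2 * θ) + s t * s (t + 2 * θ)) := by
    intro θ
    have he : ∀ φ, Real.cos (b * (Real.sin θ * Real.sin φ))
        = g (φ - θ) * g (φ + θ) + s (φ - θ) * s (φ + θ) := by
      intro φ
      rw [key θ φ]
      have hge : g (θ - φ) = g (φ - θ) := by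
        simp only [hg]; rw [← Real.cos_neg (θ - φ)]; ring_nf
      have hse : s (θ - φ) = s (φ - θ) := by
        simp only [hs]; rw [← Real.cos_neg (θ - φ)]; ring_nf
      rw [hge, hse, add_comm θ φ]
    simp only [he]
    -- substitute φ = t + θ
    have hcomp := intervalIntegral.integral_comp_add_right
      (fun φ => g (φ - θ) * g (φ + θ) + s (φ - θ) * s (φ + θ)) θ (a := -θ) (b := 2 * π - θ)
    have hend : ∫ φ in (-θ + θ)..(2 * π - θ + θ),
        (g (φ - θ) * g (φ + θ) + s (φ - θ) * s (φ + θ))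
        = ∫ φ in (0:ℝ)..(2 * π), (g (φ - θ) * g (φ + θ) + s (φ - θ) * s (φ + θ)) := by
      norm_num
    rw [← hend, ← hcomp]
    have hsimp : ∀ t : ℝ, g (t + θ - θ) * g (t + θ + θ) + s (t + θ - θ) * s (t + θ + θ)
        = g t * g (t + 2 * θ) + s t * s (t + 2 * θ) := by
      intro t
      have e1 : t + θ - θ = t := by ring
      have e2 : t + θ + θ = t + 2 * θ := by ring
      rw [e1, e2]
    simp only [hsimp]
    -- periodic shift of the interval from [-θ, 2π-θ] to [0, 2π]
    have hP : Function.Periodic (fun t => g t * g (t + 2 * θ) + s t * s (t + 2 * θ)) (2 * π) := by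
      intro x
      simp only
      rw [hgp x, hsp x]
      have : x + 2 * π + 2 * θ = (x + 2 * θ) + 2 * π := by ring
      rw [this, hgp (x + 2 * θ), hsp (x + 2 * θ)]
    have := hP.intervalIntegral_add_eq (-θ) 0
    have e3 : -θ + 2 * π = 2 * π - θ := by ring
    rw [e3] at this
    simpa using this
  simp only [step1]
  -- step 2: Fubini swap
  have hsw : Continuous fun p : ℝ × ℝ =>
      g p.2 * g (p.2 + 2 * p.1) + s p.2 * s (p.2 + 2 * p.1) := by
    have hlin : Continuous fun p : ℝ × ℝ => p.2 + 2 * p.1 := by continuity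
    exact ((hgc.comp continuous_snd).mul (hgc.comp hlin)).add
      ((hsc.comp continuous_snd).mul (hsc.comp hlin))
  rw [swap2 (fun θ t => g t * g (t + 2 * θ) + s t * s (t + 2 * θ)) hsw]
  -- step 3: inner integral over θ
  have step3 : ∀ t : ℝ,
      (∫ θ in (0:ℝ)..(2 * π), (g t * g (t + 2 * θ) + s t * s (t + 2 * θ)))
        = g t * ∫ u in (0:ℝ)..(2 * π), g u := by
    intro t
    have half : ∀ (f : ℝ → ℝ), Continuous f → Function.Periodic f (2 * π) →
        (∫ θ in (0:ℝ)..(2 * π), f (t + 2 * θ)) = ∫ u in (0:ℝ)..(2 * π), f u := by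
      intro f hfc hfp
      have hcm := intervalIntegral.integral_comp_mul_left (fun x => f (t + x)) (c := 2)
        (a := 0) (b := 2 * π) (two_ne_zero)
      -- hcm : (2:ℝ)⁻¹ • ∫ x in 2*0..2*(2π), f (t+x) = ∫ x in 0..2π, f (t + 2*x)
      have hdouble : ∫ x in (0:ℝ)..(2 * (2 * π)), f (t + x)
          = 2 * ∫ x in (0:ℝ)..(2 * π), f (t + x) := by
        have hadj : (∫ x in (0:ℝ)..(2 * π), f (t + x))
              + ∫ x in (2 * π)..(2 * (2 * π)), f (t + x)
            = ∫ x in (0:ℝ)..(2 * (2 * π)), f (t + x) :=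
          intervalIntegral.integral_add_adjacent_intervals
            ((hfc.comp (continuous_const.add continuous_id)).intervalIntegrable _ _)
            ((hfc.comp (continuous_const.add continuous_id)).intervalIntegrable _ _)
        have hsecond : ∫ x in (2 * π)..(2 * (2 * π)), f (t + x)
            = ∫ x in (0:ℝ)..(2 * π), f (t + x) := by
          have hc2 := intervalIntegral.integral_comp_add_right (fun x => f (t + x)) (2 * π)
            (a := 0) (b := 2 * π)
          have : ∀ x : ℝ, f (t + (x + 2 * π)) = f (t + x) := by
            intro x
            have e : t + (x + 2 * π) = (t + x) + 2 * π := by ring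
            rw [e, hfp (t + x)]
          simp only [this] at hc2
          rw [hc2]
          norm_num
          ring_nf
        rw [← hadj, hsecond]; ring
      have hshift : ∫ x in (0:ℝ)..(2 * π), f (t + x) = ∫ u in (0:ℝ)..(2 * π), f u := by
        have := per_shift f hfp t
        simpa [add_comm] using this
      have e0 : (2:ℝ) * 0 = 0 := by ring
      rw [e0, hdouble, hshift] at hcm
      rw [hcm]
      simp only [smul_eq_mul]
      ring
    have hi1 : Continuous fun θ : ℝ => g t * g (t + 2 * θ) := by
      exact continuous_const.mul (hgc.comp (continuous_const.add (continuous_const.mul continuous_id)))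
    have hi2 : Continuous fun θ : ℝ => s t * s (t + 2 * θ) := by
      exact continuous_const.mul (hsc.comp (continuous_const.add (continuous_const.mul continuous_id)))
    rw [intervalIntegral.integral_add
        (hi1.intervalIntegrable _ _)
        (hi2.intervalIntegrable _ _),
      intervalIntegral.integral_const_mul, intervalIntegral.integral_const_mul,
      half g hgc hgp, half s hsc hsp]
    have : (∫ u in (0:ℝ)..(2 * π), s u) = 0 := sin_cos_int_zero z
    rw [this]; ring
  simp only [step3]
  rw [intervalIntegral.integral_mul_const]
  have : (∫ t in (0:ℝ)..(2 * π), g t) = ∫ t in (0:ℝ)..(2 * π), Real.cos (b / 2 * Real.cos t) := rfl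
  rw [this]; ring

/-- Relating the `cos ∘ cos` integral to the `cos ∘ sin` integral in `J₀`. -/
lemma cos_cos_eq_cos_sin (zz : ℝ) :
    ∫ t in (0:ℝ)..(2 * π), Real.cos (zz * Real.cos t)
      = ∫ t in (0:ℝ)..(2 * π), Real.cos (zz * Real.sin t) := by
  have hp : Function.Periodic (fun t => Real.cos (zz * Real.sin t)) (2 * π) := by
    intro x; simp [Real.sin_add]
  have := per_shift (fun t => Real.cos (zz * Real.sin t)) hp (π / 2)
  have hpt : ∀ x : ℝ, Real.sin (x + π / 2) = Real.cos x := by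
    intro x; rw [Real.sin_add]; simp
  simp only [hpt] at this
  exact this

lemma E2_eq_J0_sq (b : ℝ) :
    E2 (fun θ φ => Real.cos (b * (Real.sin θ * Real.sin φ))) = (J₀ (b / 2)) ^ 2 := by
  rw [E2, bessel_core, cos_cos_eq_cos_sin, J₀]
  have hπ : π ≠ 0 := Real.pi_ne_zero
  field_simp

set_option maxHeartbeats 1000000 in
theorem stmt_16 (a c₁ c₂ c₃ : ℝ) :
    E6 (fun θ₁ φ₁ θ₂ φ₂ θ₃ φ₃ =>
        Real.cos (a * (c₁ * (Real.sin θ₁ * Real.sin φ₁) +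
          c₂ * (Real.sin θ₂ * Real.sin φ₂) + c₃ * (Real.sin θ₃ * Real.sin φ₃))))
      = E2 (fun θ φ => Real.cos (a * c₁ * (Real.sin θ * Real.sin φ))) *
        E2 (fun θ φ => Real.cos (a * c₂ * (Real.sin θ * Real.sin φ))) *
        E2 (fun θ φ => Real.cos (a * c₃ * (Real.sin θ * Real.sin φ))) ∧
    E6 (fun θ₁ φ₁ θ₂ φ₂ θ₃ φ₃ =>
        Real.cos (a * (c₁ * (Real.sin θ₁ * Real.sin φ₁) +
          c₂ * (Real.sin θ₂ * Real.sin φ₂) + c₃ * (Real.sin θ₃ * Real.sin φ₃))))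
      = (J₀ (c₁ * a / 2)) ^ 2 * (J₀ (c₂ * a / 2)) ^ 2 * (J₀ (c₃ * a / 2)) ^ 2 := by
  set C : ℝ → ℝ := fun b =>
    ∫ θ in (0:ℝ)..(2 * π), ∫ φ in (0:ℝ)..(2 * π), Real.cos (b * (Real.sin θ * Real.sin φ))
    with hC
  -- peel off the innermost pair three times
  have main : E6 (fun θ₁ φ₁ θ₂ φ₂ θ₃ φ₃ =>
      Real.cos (a * (c₁ * (Real.sin θ₁ * Real.sin φ₁) +
        c₂ * (Real.sin θ₂ * Real.sin φ₂) + c₃ * (Real.sin θ₃ * Real.sin φ₃))))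
      = (1 / (2 * π) ^ 6) * (C (a * c₁) * C (a * c₂) * C (a * c₃)) := by
    rw [E6]
    congr 1
    -- innermost pair (θ₃, φ₃)
    have inner3 : ∀ θ₁ φ₁ θ₂ φ₂ : ℝ,
        (∫ θ₃ in (0:ℝ)..(2 * π), ∫ φ₃ in (0:ℝ)..(2 * π),
          Real.cos (a * (c₁ * (Real.sin θ₁ * Real.sin φ₁) +
            c₂ * (Real.sin θ₂ * Real.sin φ₂) + c₃ * (Real.sin θ₃ * Real.sin φ₃))))
        = Real.cos (a * c₁ * (Real.sin θ₁ * Real.sin φ₁) +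
            a * c₂ * (Real.sin θ₂ * Real.sin φ₂)) * C (a * c₃) := by
      intro θ₁ φ₁ θ₂ φ₂
      have harg : ∀ θ₃ φ₃ : ℝ, a * (c₁ * (Real.sin θ₁ * Real.sin φ₁) +
            c₂ * (Real.sin θ₂ * Real.sin φ₂) + c₃ * (Real.sin θ₃ * Real.sin φ₃))
          = (a * c₁ * (Real.sin θ₁ * Real.sin φ₁) + a * c₂ * (Real.sin θ₂ * Real.sin φ₂))
            + (a * c₃) * (Real.sin θ₃ * Real.sin φ₃) := by intro θ₃ φ₃; ring
      simp only [harg]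
      exact cos_factor _ _
    simp only [inner3]
    -- pull out C (a*c₃) through the four outer integrals
    simp only [intervalIntegral.integral_mul_const]
    -- now the pair (θ₂, φ₂)
    have inner2 : ∀ θ₁ φ₁ : ℝ,
        (∫ θ₂ in (0:ℝ)..(2 * π), ∫ φ₂ in (0:ℝ)..(2 * π),
          Real.cos (a * c₁ * (Real.sin θ₁ * Real.sin φ₁) +
            a * c₂ * (Real.sin θ₂ * Real.sin φ₂)))
        = Real.cos (a * c₁ * (Real.sin θ₁ * Real.sin φ₁)) * C (a * c₂) := by
      intro θ₁ φ₁
      exact cos_factor _ _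
    simp only [inner2]
    simp only [intervalIntegral.integral_mul_const]
    rfl
  have hE2 : ∀ b : ℝ, E2 (fun θ φ => Real.cos (b * (Real.sin θ * Real.sin φ)))
      = (1 / (2 * π) ^ 2) * C b := fun b => rfl
  constructor
  · rw [main, hE2 (a * c₁), hE2 (a * c₂), hE2 (a * c₃)]
    have hat : ∀ b : ℝ, C (a * b) = C (a * b) := fun _ => rfl
    ring
  · have hJ : ∀ b : ℝ, (1 / (2 * π) ^ 2) * C b = (J₀ (b / 2)) ^ 2 := by
      intro b
      have := E2_eq_J0_sq b
      rwa [E2] at this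
    rw [main]
    have e1 : a * c₁ / 2 = c₁ * a / 2 := by ring
    have e2 : a * c₂ / 2 = c₂ * a / 2 := by ring
    have e3 : a * c₃ / 2 = c₃ * a / 2 := by ring
    have h1 := hJ (a * c₁); rw [e1] at h1
    have h2 := hJ (a * c₂); rw [e2] at h2
    have h3 := hJ (a * c₃); rw [e3] at h3
    have hfin : (1 / (2 * π) ^ 6) * (C (a * c₁) * C (a * c₂) * C (a * c₃))
        = ((1 / (2 * π) ^ 2) * C (a * c₁)) * ((1 / (2 * π) ^ 2) * C (a * c₂))
          * ((1 / (2 * π) ^ 2) * C (a * c₃)) := by ring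
    rw [hfin, h1, h2, h3]
end
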